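/- Let 0 < μ < 1 and define q(c) = ((1−μ)/2)·h((c+1)/(1−μ)) and r(c) = ((1+μ)/2)·h((c+1)/(1+μ)) for c ∈ [−1, −μ], where h is binary entropy. Then q(c) < r(c) for all c ∈ (−1, −μ]. -/

import Mathlib

/-- Binary entropy in bits (with `h 0 = h 1 = 0` since `logb 2 0 = 0`). -/
noncomputable def binEnt (p : ℝ) : ℝ := -(p * Real.logb 2 p) - (1 - p) * Real.logb 2 (1 - p)

noncomputable def Faux (t s : ℝ) : ℝ :=
  s * Real.log s - (s - t) * Real.log (s - t) - t * Real.log t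

lemma binEnt_eq (t s : ℝ) (ht : 0 < t) (hts : t ≤ s) :
    (s / 2) * binEnt (t / s) = Faux t s / (2 * Real.log 2) := by
  have hs : 0 < s := lt_of_lt_of_le ht hts
  have hlog2 : Real.log 2 ≠ 0 := by
    have := Real.log_pos (by norm_num : (1:ℝ) < 2); linarith
  have h1 : Real.log (t / s) = Real.log t - Real.log s :=
    Real.log_div ht.ne' hs.ne'
  have h0 : (1 : ℝ) - t / s = (s - t) / s := by field_simp
  have h2 : (s - t) * Real.log ((s - t) / s)
      = (s - t) * (Real.log (s - t) - Real.log s) := by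
    rcases eq_or_lt_of_le hts with h | h
    · simp [h]
    · rw [Real.log_div (by linarith) hs.ne']
  unfold binEnt Faux Real.logb
  rw [h1, h0]
  field_simp
  nlinarith [h2, hs.ne']

lemma Faux_strictMonoOn (t : ℝ) (ht : 0 < t) :
    StrictMonoOn (Faux t) (Set.Ici t) := by
  have hcont : ContinuousOn (Faux t) (Set.Ici t) := by
    apply ContinuousOn.sub
    apply ContinuousOn.sub
    · exact Real.continuous_mul_log.continuousOn
    · exact (Real.continuous_mul_log.comp (continuous_id.sub continuous_const)).continuousOn
    · exact continuousOn_const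
  apply strictMonoOn_of_deriv_pos (convex_Ici t) hcont
  intro s hs
  rw [interior_Ici] at hs
  have hst : 0 < s - t := sub_pos.mpr hs
  have hs0 : 0 < s := ht.trans hs
  have d1 : HasDerivAt (fun x : ℝ => x * Real.log x) (Real.log s + 1) s :=
    Real.hasDerivAt_mul_log hs0.ne'
  have d2 : HasDerivAt (fun x : ℝ => (x - t) * Real.log (x - t)) (Real.log (s - t) + 1) s := by
    have := (Real.hasDerivAt_mul_log hst.ne').comp s ((hasDerivAt_id s).sub_const t)
    simpa [Function.comp_def] using this
  have d : HasDerivAt (Faux t) (Real.log s - Real.log (s - t)) s := by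
    have h := (d1.sub d2).sub_const (t * Real.log t)
    rw [show Real.log s - Real.log (s - t) = Real.log s + 1 - (Real.log (s - t) + 1) by ring]
    exact h
  rw [d.deriv]
  have : Real.log (s - t) < Real.log s := Real.log_lt_log hst (by linarith)
  linarith

/-- Lemma 1 of the paper: for `-1 < c ≤ -μ`,
`q(c) = ((1-μ)/2)·h((c+1)/(1-μ)) < ((1+μ)/2)·h((c+1)/(1+μ)) = r(c)`. -/
theorem lemma_q_lt_r (μ : ℝ) (hμ0 : 0 < μ) (hμ1 : μ < 1) :
    ∀ c ∈ Set.Ioc (-1 : ℝ) (-μ),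
      ((1 - μ) / 2) * binEnt ((c + 1) / (1 - μ)) <
        ((1 + μ) / 2) * binEnt ((c + 1) / (1 + μ)) := by
  intro c hc
  obtain ⟨hc1, hc2⟩ := hc
  set t := c + 1 with htdef
  have ht : 0 < t := by simp [htdef]; linarith
  have hta : t ≤ 1 - μ := by simp [htdef]; linarith
  have hab : (1 - μ) < 1 + μ := by linarith
  rw [binEnt_eq t (1 - μ) ht hta, binEnt_eq t (1 + μ) ht (by linarith)]
  have hlog2 : 0 < Real.log 2 := Real.log_pos (by norm_num)
  have hF := (Faux_strictMonoOn t ht) (Set.mem_Ici.mpr hta)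
    (Set.mem_Ici.mpr (by linarith : t ≤ 1 + μ)) hab
  exact (div_lt_div_iff_of_pos_right (by linarith)).mpr hF
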